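/- Let Q ∈ ℝⁿˣⁿ be symmetric and indefinite, and write Q = Q₁ − Q₂ where Q₁, Q₂ ∈ ℝⁿˣⁿ are symmetric positive semidefinite with orthogonal ranges, R(Q₁) ⊥ R(Q₂) (for instance, Q₁ and Q₂ are the positive and negative semidefinite parts of Q), and let r₁ = rank(Q₁), r₂ = rank(Q₂). Let b₀, …, b_p ∈ ℝⁿ, d₀ ∈ ℝ, and l_i ∈ ℝ ∪ {−∞}, u_i ∈ ℝ ∪ {+∞} with l_i ≤ u_i. Suppose the rank of the matrix [b₁, …, b_p] is at most min{r₁, r₂} − 1. Consider (UQ): maximize xᵀQx + 2 b₀ᵀx + d₀ over x ∈ ℝⁿ subject to l_i ≤ xᵀQx + 2 b_iᵀx ≤ u_i for i = 1, …, p, and its relaxation (SOCP'): maximize t₁ − t₂ + 2 b₀ᵀx + d₀ over (x, t₁, t₂) ∈ ℝⁿ × ℝ × ℝ subject to l_i ≤ t₁ − t₂ + 2 b_iᵀx ≤ u_i for all i, xᵀQ₁x ≤ t₁, and xᵀQ₂x ≤ t₂. If the optimal value of (SOCP') is < +∞, then x* is a global maximizer of (UQ) if and only if (x*, x*ᵀQ₁x*,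 x*ᵀQ₂x*) is a global maximizer of (SOCP'). -/

import Mathlib

open Matrix

/-- for an indefinite symmetric `Q = Q₁ − Q₂` with `Q₁, Q₂ ⪰ 0` having
orthogonal ranges, and `rank [b₁ … b_p] ≤ min{rank Q₁, rank Q₂} − 1`, global maximizers
of (UQ) correspond to global maximizers of the relaxation (SOCP'), provided the
relaxation value is `< +∞`. -/

lemma aux_symm_dot {n : ℕ} {A : Matrix (Fin n) (Fin n) ℝ} (hA : Aᵀ = A)
    (x y : Fin n → ℝ) : x ⬝ᵥ (A *ᵥ y) = y ⬝ᵥ (A *ᵥ x) := by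
  rw [dotProduct_mulVec, ← mulVec_transpose, hA, dotProduct_comm]

lemma aux_exists_dir {n p : ℕ} (A : Matrix (Fin n) (Fin n) ℝ)
    (B : Matrix (Fin p) (Fin n) ℝ) (hr : B.rank < A.rank) :
    ∃ d : Fin n → ℝ, d ≠ 0 ∧ (∃ y, A *ᵥ y = d) ∧ B *ᵥ d = 0 := by
  have hr' : Module.finrank ℝ (LinearMap.range B.mulVecLin) <
      Module.finrank ℝ (LinearMap.range A.mulVecLin) := hr
  have hrn := LinearMap.finrank_range_add_finrank_ker B.mulVecLin
  rw [Module.finrank_fin_fun] at hrn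
  have hsup := Submodule.finrank_sup_add_finrank_inf_eq
    (LinearMap.range A.mulVecLin) (LinearMap.ker B.mulVecLin)
  have hle : Module.finrank ℝ
      ((LinearMap.range A.mulVecLin ⊔ LinearMap.ker B.mulVecLin : Submodule ℝ (Fin n → ℝ)) :
        Submodule ℝ (Fin n → ℝ)) ≤ n := by
    simpa [Module.finrank_fin_fun] using
      (LinearMap.range A.mulVecLin ⊔ LinearMap.ker B.mulVecLin).finrank_le
  have hpos : 0 < Module.finrank ℝ
      ((LinearMap.range A.mulVecLin ⊓ LinearMap.ker B.mulVecLin : Submodule ℝ (Fin n → ℝ)) :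
        Submodule ℝ (Fin n → ℝ)) := by
    omega
  have hne : (LinearMap.range A.mulVecLin ⊓ LinearMap.ker B.mulVecLin :
      Submodule ℝ (Fin n → ℝ)) ≠ ⊥ := by
    intro h
    rw [h] at hpos
    simp at hpos
  obtain ⟨d, hd, hd0⟩ := Submodule.exists_mem_ne_zero_of_ne_bot hne
  exact ⟨d, hd0, hd.1, hd.2⟩

lemma aux_shift {n p : ℕ} (A C : Matrix (Fin n) (Fin n) ℝ)
    (hA : A.PosSemidef) (hC : C.PosSemidef)
    (horth : ∀ x y : Fin n → ℝ, (A *ᵥ x) ⬝ᵥ (C *ᵥ y) = 0)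
    (B : Matrix (Fin p) (Fin n) ℝ) (hr : B.rank < A.rank)
    (b0 x : Fin n → ℝ) (Δ : ℝ) (hΔ : 0 ≤ Δ) :
    ∃ x' : Fin n → ℝ,
      x' ⬝ᵥ (A *ᵥ x') = x ⬝ᵥ (A *ᵥ x) + Δ ∧
      x' ⬝ᵥ (C *ᵥ x') = x ⬝ᵥ (C *ᵥ x) ∧
      B *ᵥ x' = B *ᵥ x ∧
      b0 ⬝ᵥ x ≤ b0 ⬝ᵥ x' := by
  obtain ⟨d, hd0, ⟨y, hy⟩, hBd⟩ := aux_exists_dir A B hr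
  have hAs : Aᵀ = A := by
    rw [← A.conjTranspose_eq_transpose_of_trivial]; exact hA.1
  have hCs : Cᵀ = C := by
    rw [← C.conjTranspose_eq_transpose_of_trivial]; exact hC.1
  have hCd : C *ᵥ d = 0 := by
    have h1 : d ⬝ᵥ (C *ᵥ d) = 0 := by
      have := horth y d
      rwa [hy] at this
    exact (hC.dotProduct_mulVec_zero_iff d).mp (by simpa using h1)
  set a : ℝ := d ⬝ᵥ (A *ᵥ d) with ha
  have ha0 : 0 ≤ a := by simpa using hA.dotProduct_mulVec_nonneg d
  have hapos : 0 < a := by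
    rcases ha0.lt_or_eq with h | h
    · exact h
    · exfalso
      have hAd : A *ᵥ d = 0 := (hA.dotProduct_mulVec_zero_iff d).mp (by simpa using h.symm)
      have : d ⬝ᵥ d = 0 := by
        calc d ⬝ᵥ d = (A *ᵥ y) ⬝ᵥ d := by rw [hy]
        _ = d ⬝ᵥ (A *ᵥ y) := by rw [dotProduct_comm]
        _ = y ⬝ᵥ (A *ᵥ d) := aux_symm_dot hAs d y
        _ = 0 := by rw [hAd, dotProduct_zero]
      exact hd0 (dotProduct_self_eq_zero.mp this)
  set c : ℝ := d ⬝ᵥ (A *ᵥ x) with hc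
  set s : ℝ := Real.sqrt (c ^ 2 + a * Δ) with hs
  have hs2 : s ^ 2 = c ^ 2 + a * Δ :=
    Real.sq_sqrt (by positivity)
  have hsc : c ≤ s ∧ -c ≤ s := by
    constructor <;> nlinarith [Real.sqrt_nonneg (c ^ 2 + a * Δ), hs2]
  set α : ℝ := if 0 ≤ b0 ⬝ᵥ d then (-c + s) / a else (-c - s) / a with hα
  have hquad : a * α ^ 2 + 2 * c * α = Δ := by
    rcases le_or_gt 0 (b0 ⬝ᵥ d) with h | h
    · rw [hα, if_pos h]; field_simp; nlinarith [hs2]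
    · rw [hα, if_neg (not_le.mpr h)]; field_simp; nlinarith [hs2]
  have hαb : 0 ≤ α * (b0 ⬝ᵥ d) := by
    rcases le_or_gt 0 (b0 ⬝ᵥ d) with h | h
    · have : 0 ≤ α := by
        rw [hα, if_pos h]
        apply div_nonneg _ hapos.le
        linarith [hsc.2]
      exact mul_nonneg this h
    · have : α ≤ 0 := by
        rw [hα, if_neg (not_le.mpr h)]
        apply div_nonpos_of_nonpos_of_nonneg _ hapos.le
        linarith [hsc.2]
      nlinarith
  refine ⟨x + α • d, ?_, ?_, ?_, ?_⟩
  · have hxd : x ⬝ᵥ (A *ᵥ d) = c := aux_symm_dot hAs x d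
    simp only [mulVec_add, mulVec_smul, dotProduct_add, add_dotProduct,
      dotProduct_smul, smul_dotProduct, smul_eq_mul]
    rw [hxd, ← hc, ← ha]
    nlinarith [hquad]
  · have h1 : x ⬝ᵥ (C *ᵥ d) = 0 := by rw [hCd, dotProduct_zero]
    have h2 : d ⬝ᵥ (C *ᵥ x) = 0 := by rw [aux_symm_dot hCs d x, h1]
    simp only [mulVec_add, mulVec_smul, dotProduct_add, add_dotProduct,
      dotProduct_smul, smul_dotProduct, smul_eq_mul, hCd, dotProduct_zero,
      mul_zero, add_zero, h2]
  · rw [mulVec_add, mulVec_smul, hBd, smul_zero, add_zero]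
  · rw [dotProduct_add, dotProduct_smul, smul_eq_mul]
    nlinarith [hαb]

theorem stmt10 (n p : ℕ) (Q Q1 Q2 : Matrix (Fin n) (Fin n) ℝ) (hQsymm : Q.IsSymm)
    (hindef : (∃ x : Fin n → ℝ, 0 < x ⬝ᵥ (Q *ᵥ x)) ∧ (∃ x : Fin n → ℝ, x ⬝ᵥ (Q *ᵥ x) < 0))
    (hdec : Q = Q1 - Q2) (hQ1 : Q1.PosSemidef) (hQ2 : Q2.PosSemidef)
    (horth : ∀ x y : Fin n → ℝ, (Q1 *ᵥ x) ⬝ᵥ (Q2 *ᵥ y) = 0)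
    (b0 : Fin n → ℝ) (b : Fin p → Fin n → ℝ) (d0 : ℝ)
    (l u : Fin p → EReal) (hl : ∀ i, l i ≠ ⊤) (hu : ∀ i, u i ≠ ⊥) (hlu : ∀ i, l i ≤ u i)
    (hrank : (Matrix.of fun (i : Fin n) (j : Fin p) => b j i).rank ≤
      min Q1.rank Q2.rank - 1)
    (hfin : sSup ((fun q : (Fin n → ℝ) × ℝ × ℝ =>
        ((q.2.1 - q.2.2 + 2 * (b0 ⬝ᵥ q.1) + d0 : ℝ) : EReal)) ''
      {q | (∀ i, l i ≤ ((q.2.1 - q.2.2 + 2 * (b i ⬝ᵥ q.1) : ℝ) : EReal) ∧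
              ((q.2.1 - q.2.2 + 2 * (b i ⬝ᵥ q.1) : ℝ) : EReal) ≤ u i) ∧
           q.1 ⬝ᵥ (Q1 *ᵥ q.1) ≤ q.2.1 ∧ q.1 ⬝ᵥ (Q2 *ᵥ q.1) ≤ q.2.2}) ≠ ⊤)
    (xs : Fin n → ℝ) :
    -- `xs` globally solves (UQ)
    ((∀ i, l i ≤ ((xs ⬝ᵥ (Q *ᵥ xs) + 2 * (b i ⬝ᵥ xs) : ℝ) : EReal) ∧
        ((xs ⬝ᵥ (Q *ᵥ xs) + 2 * (b i ⬝ᵥ xs) : ℝ) : EReal) ≤ u i) ∧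
      (∀ x : Fin n → ℝ,
        (∀ i, l i ≤ ((x ⬝ᵥ (Q *ᵥ x) + 2 * (b i ⬝ᵥ x) : ℝ) : EReal) ∧
            ((x ⬝ᵥ (Q *ᵥ x) + 2 * (b i ⬝ᵥ x) : ℝ) : EReal) ≤ u i) →
        x ⬝ᵥ (Q *ᵥ x) + 2 * (b0 ⬝ᵥ x) + d0 ≤ xs ⬝ᵥ (Q *ᵥ xs) + 2 * (b0 ⬝ᵥ xs) + d0)) ↔
    -- `(xs, xsᵀQ₁xs, xsᵀQ₂xs)` globally solves (SOCP')
    (((∀ i, l i ≤ ((xs ⬝ᵥ (Q1 *ᵥ xs) - xs ⬝ᵥ (Q2 *ᵥ xs) + 2 * (b i ⬝ᵥ xs) : ℝ) : EReal) ∧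
          ((xs ⬝ᵥ (Q1 *ᵥ xs) - xs ⬝ᵥ (Q2 *ᵥ xs) + 2 * (b i ⬝ᵥ xs) : ℝ) : EReal) ≤ u i) ∧
        xs ⬝ᵥ (Q1 *ᵥ xs) ≤ xs ⬝ᵥ (Q1 *ᵥ xs) ∧ xs ⬝ᵥ (Q2 *ᵥ xs) ≤ xs ⬝ᵥ (Q2 *ᵥ xs)) ∧
      (∀ (x : Fin n → ℝ) (t1 t2 : ℝ),
        ((∀ i, l i ≤ ((t1 - t2 + 2 * (b i ⬝ᵥ x) : ℝ) : EReal) ∧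
            ((t1 - t2 + 2 * (b i ⬝ᵥ x) : ℝ) : EReal) ≤ u i) ∧
          x ⬝ᵥ (Q1 *ᵥ x) ≤ t1 ∧ x ⬝ᵥ (Q2 *ᵥ x) ≤ t2) →
        t1 - t2 + 2 * (b0 ⬝ᵥ x) + d0 ≤
          xs ⬝ᵥ (Q1 *ᵥ xs) - xs ⬝ᵥ (Q2 *ᵥ xs) + 2 * (b0 ⬝ᵥ xs) + d0)) := by
  have hQform : ∀ x : Fin n → ℝ, x ⬝ᵥ (Q *ᵥ x) = x ⬝ᵥ (Q1 *ᵥ x) - x ⬝ᵥ (Q2 *ᵥ x) := by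
    intro x
    rw [hdec, Matrix.sub_mulVec, dotProduct_sub]
  -- positive ranks
  have hr1 : 0 < Q1.rank := by
    obtain ⟨x0, hx0⟩ := hindef.1
    have h2 : 0 ≤ x0 ⬝ᵥ (Q2 *ᵥ x0) := by simpa using hQ2.dotProduct_mulVec_nonneg x0
    rw [hQform] at hx0
    have h1 : 0 < x0 ⬝ᵥ (Q1 *ᵥ x0) := by linarith
    by_contra h
    push_neg at h
    have h0 : Q1.rank = 0 := Nat.le_zero.mp h
    have hbot : (LinearMap.range Q1.mulVecLin : Submodule ℝ (Fin n → ℝ)) = ⊥ :=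
      Submodule.finrank_eq_zero.mp h0
    have : Q1 *ᵥ x0 = 0 := by
      have hmem : Q1 *ᵥ x0 ∈ (LinearMap.range Q1.mulVecLin : Submodule ℝ (Fin n → ℝ)) :=
        LinearMap.mem_range_self _ x0
      rw [hbot] at hmem
      simpa using hmem
    rw [this, dotProduct_zero] at h1
    exact lt_irrefl _ h1
  have hr2 : 0 < Q2.rank := by
    obtain ⟨x0, hx0⟩ := hindef.2
    have h2 : 0 ≤ x0 ⬝ᵥ (Q1 *ᵥ x0) := by simpa using hQ1.dotProduct_mulVec_nonneg x0
    rw [hQform] at hx0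
    have h1 : 0 < x0 ⬝ᵥ (Q2 *ᵥ x0) := by linarith
    by_contra h
    push_neg at h
    have h0 : Q2.rank = 0 := Nat.le_zero.mp h
    have hbot : (LinearMap.range Q2.mulVecLin : Submodule ℝ (Fin n → ℝ)) = ⊥ :=
      Submodule.finrank_eq_zero.mp h0
    have : Q2 *ᵥ x0 = 0 := by
      have hmem : Q2 *ᵥ x0 ∈ (LinearMap.range Q2.mulVecLin : Submodule ℝ (Fin n → ℝ)) :=
        LinearMap.mem_range_self _ x0
      rw [hbot] at hmem
      simpa using hmem
    rw [this, dotProduct_zero] at h1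
    exact lt_irrefl _ h1
  -- the matrix with rows bᵢ
  set B : Matrix (Fin p) (Fin n) ℝ := Matrix.of (fun i j => b i j) with hBdef
  have hMT : (Matrix.of fun (i : Fin n) (j : Fin p) => b j i) = Bᵀ := by
    ext i j
    rfl
  rw [hMT, Matrix.rank_transpose] at hrank
  have hB1 : B.rank < Q1.rank := by
    have h1 := min_le_left Q1.rank Q2.rank
    have h2 := min_le_right Q1.rank Q2.rank
    omega
  have hB2 : B.rank < Q2.rank := by
    have h1 := min_le_left Q1.rank Q2.rank
    have h2 := min_le_right Q1.rank Q2.rank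
    omega
  have horth' : ∀ x y : Fin n → ℝ, (Q2 *ᵥ x) ⬝ᵥ (Q1 *ᵥ y) = 0 := by
    intro x y
    rw [dotProduct_comm]
    exact horth y x
  constructor
  · rintro ⟨hfeas, hmax⟩
    refine ⟨⟨?_, le_refl _, le_refl _⟩, ?_⟩
    · intro i
      rw [← hQform]
      exact hfeas i
    · rintro x t1 t2 ⟨hcons, h1, h2⟩
      rw [← hQform xs]
      rcases le_or_gt (t2 - x ⬝ᵥ (Q2 *ᵥ x)) (t1 - x ⬝ᵥ (Q1 *ᵥ x)) with hcase | hcase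
      · obtain ⟨x', hA', hC', hB', hb0'⟩ := aux_shift Q1 Q2 hQ1 hQ2 horth B hB1 b0 x
          ((t1 - x ⬝ᵥ (Q1 *ᵥ x)) - (t2 - x ⬝ᵥ (Q2 *ᵥ x))) (by linarith)
        have hbi : ∀ i, b i ⬝ᵥ x' = b i ⬝ᵥ x := fun i => congrFun hB' i
        have hqx' : x' ⬝ᵥ (Q *ᵥ x') = t1 - t2 := by
          rw [hQform, hA', hC']
          ring
        have hfx' : ∀ i, l i ≤ ((x' ⬝ᵥ (Q *ᵥ x') + 2 * (b i ⬝ᵥ x') : ℝ) : EReal) ∧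
            ((x' ⬝ᵥ (Q *ᵥ x') + 2 * (b i ⬝ᵥ x') : ℝ) : EReal) ≤ u i := by
          intro i
          rw [hqx', hbi i]
          exact hcons i
        have hm := hmax x' hfx'
        rw [hqx'] at hm
        linarith
      · obtain ⟨x', hA', hC', hB', hb0'⟩ := aux_shift Q2 Q1 hQ2 hQ1 horth' B hB2 b0 x
          ((t2 - x ⬝ᵥ (Q2 *ᵥ x)) - (t1 - x ⬝ᵥ (Q1 *ᵥ x))) (by linarith)
        have hbi : ∀ i, b i ⬝ᵥ x' = b i ⬝ᵥ x := fun i => congrFun hB' i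
        have hqx' : x' ⬝ᵥ (Q *ᵥ x') = t1 - t2 := by
          rw [hQform, hA', hC']
          ring
        have hfx' : ∀ i, l i ≤ ((x' ⬝ᵥ (Q *ᵥ x') + 2 * (b i ⬝ᵥ x') : ℝ) : EReal) ∧
            ((x' ⬝ᵥ (Q *ᵥ x') + 2 * (b i ⬝ᵥ x') : ℝ) : EReal) ≤ u i := by
          intro i
          rw [hqx', hbi i]
          exact hcons i
        have hm := hmax x' hfx'
        rw [hqx'] at hm
        linarith
  · rintro ⟨⟨hfeas, -, -⟩, hmax⟩
    constructor
    · intro i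
      rw [hQform]
      exact hfeas i
    · intro x hx
      have hfeasx : ∀ i, l i ≤ ((x ⬝ᵥ (Q1 *ᵥ x) - x ⬝ᵥ (Q2 *ᵥ x) + 2 * (b i ⬝ᵥ x) : ℝ) : EReal) ∧
          ((x ⬝ᵥ (Q1 *ᵥ x) - x ⬝ᵥ (Q2 *ᵥ x) + 2 * (b i ⬝ᵥ x) : ℝ) : EReal) ≤ u i := by
        intro i
        rw [← hQform]
        exact hx i
      have := hmax x (x ⬝ᵥ (Q1 *ᵥ x)) (x ⬝ᵥ (Q2 *ᵥ x)) ⟨hfeasx, le_refl _, le_refl _⟩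
      rw [hQform x, hQform xs]
      exact this
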